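/- If a hypothesis class H admits a total computable online learner making at most d mistakes on every H-realizable sample, then the effective Littlestone dimension of H is at most d. -/
import Mathlib


/-- A sample: a finite sequence of (point, label) pairs. -/
abbrev Sample := List (ℕ × Bool)

/-- A sample is consistent with `f` if `f` agrees with every labeled pair. -/
def Consistent (f : ℕ → Bool) (S : Sample) : Prop := ∀ p ∈ S, f p.1 = p.2

/-- A sample is realizable by `H` if some function in `H` is consistent with it. -/
def Realizable (H : Set (ℕ → Bool)) (S : Sample) : Prop := ∃ f ∈ H, Consistent f S

/-- A (total) learner maps a sample and a query point to a prediction. -/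
abbrev Learner := Sample → ℕ → Bool

/-- Number of sequential prediction mistakes of learner `L` on sample `S`. -/
def mistakes (L : Learner) (S : Sample) : ℕ :=
  (List.range S.length).countP fun i =>
    decide (L (S.take i) (S.getD i (0, false)).1 ≠ (S.getD i (0, false)).2)

/-- Code of a Littlestone tree: association list assigning labels to nodes
(nodes are indexed by the bit-path leading to them; missing nodes get label 0). -/
abbrev TreeCode := List (List Bool × ℕ)

/-- Label of the node reached by path `p` in the tree coded by `T`. -/
def nodeLabel (T : TreeCode) (p : List Bool) : ℕ := (T.lookup p).getD 0

/-- The sample written along the branch `p` (a list of edge bits) in the tree `T`. -/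
def branchSample (T : TreeCode) (p : List Bool) : Sample :=
  (List.range p.length).map fun i => (nodeLabel T (p.take i), p.getD i false)

/-- `H` has Littlestone dimension at most `d`: every Littlestone tree of depth `d+1`
has a leaf whose branch sample is not `H`-realizable. -/
def LdimLe (H : Set (ℕ → Bool)) (d : ℕ) : Prop :=
  ∀ T : TreeCode, ∃ p : List Bool, p.length = d + 1 ∧ ¬ Realizable H (branchSample T p)

/-- The Littlestone dimension of `H` (`⊤` if infinite). -/
noncomputable def Ldim (H : Set (ℕ → Bool)) : ℕ∞ :=
  sInf ((↑) '' {d : ℕ | LdimLe H d})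

/-- `H` has effective Littlestone dimension at most `d`: a total computable function
indicates, in every depth-`(d+1)` Littlestone tree, a leaf that is not `H`-realizable. -/
def EldimLe (H : Set (ℕ → Bool)) (d : ℕ) : Prop :=
  ∃ A : TreeCode → List Bool, Computable A ∧
    ∀ T, (A T).length = d + 1 ∧ ¬ Realizable H (branchSample T (A T))

/-- The effective Littlestone dimension of `H` (`⊤` if infinite). -/
noncomputable def Eldim (H : Set (ℕ → Bool)) : ℕ∞ :=
  sInf ((↑) '' {d : ℕ | EldimLe H d})

/-- The cylinder induced by a sample: all functions consistent with it. -/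
def Cyl (S : Sample) : Set (ℕ → Bool) := {f | Consistent f S}

/-- Effectively open subset of Cantor space: union of a computably enumerated
family of cylinders. -/
def EffOpen (X : Set (ℕ → Bool)) : Prop :=
  ∃ g : ℕ → Sample, Computable g ∧ X = ⋃ n, Cyl (g n)

/-- Effectively closed subset of Cantor space: complement is effectively open. -/
def EffClosed (X : Set (ℕ → Bool)) : Prop := EffOpen Xᶜ

def advStep (L : Learner) (T : TreeCode) (q : List Bool × Sample) : List Bool × Sample :=
  (q.1 ++ [!(L q.2 (nodeLabel T q.1))], q.2 ++ [(nodeLabel T q.1, !(L q.2 (nodeLabel T q.1)))])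

def advIter (L : Learner) : ℕ → TreeCode → List Bool × Sample
  | 0, _ => ([], [])
  | n+1, T => advStep L T (advIter L n T)

lemma advStep_computable {L : Learner} (hc : Computable₂ L) :
    Computable₂ (advStep L) := by
  have hx : Computable fun q : TreeCode × (List Bool × Sample) =>
      nodeLabel q.1 q.2.1 := by
    have hinst : (List.instBEq : BEq (List Bool)) = instBEqOfDecidableEq :=
      lawful_beq_subsingleton _ _
    have : Primrec fun q : TreeCode × (List Bool × Sample) =>
        (q.1.lookup q.2.1).getD 0 := by
      rw [hinst]
      exact Primrec.option_getD.comp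
        (Primrec.listLookup.comp (Primrec.fst.comp Primrec.snd) Primrec.fst)
        (Primrec.const 0)
    exact this.to_comp
  have hb : Computable fun q : TreeCode × (List Bool × Sample) =>
      !(L q.2.2 (nodeLabel q.1 q.2.1)) := by
    exact (Primrec.not.to_comp).comp
      (hc.comp (Computable.snd.comp Computable.snd) hx)
  exact Computable.pair
    ((Primrec.list_concat.to_comp).comp (Computable.fst.comp Computable.snd) hb)
    ((Primrec.list_concat.to_comp).comp (Computable.snd.comp Computable.snd)
      (Computable.pair hx hb))

lemma advIter_computable {L : Learner} (hc : Computable₂ L) (n : ℕ) :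
    Computable (advIter L n) := by
  induction n with
  | zero => exact Computable.const ([], [])
  | succ n ih => exact (advStep_computable hc).comp Computable.id ih

lemma branchSample_concat (T : TreeCode) (p : List Bool) (b : Bool) :
    branchSample T (p ++ [b]) = branchSample T p ++ [(nodeLabel T p, b)] := by
  unfold branchSample
  rw [List.length_append, List.length_singleton, List.range_succ, List.map_append]
  congr 1
  · apply List.map_congr_left
    intro i hi
    rw [List.mem_range] at hi
    rw [List.take_append_of_le_length (le_of_lt hi), List.getD_append _ _ _ _ hi]
  · simp [List.take_append_of_le_length, List.getD_append_right]

lemma mistakes_concat (L : Learner) (S : Sample) (e : ℕ × Bool) :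
    mistakes L (S ++ [e]) = mistakes L S + if L S e.1 = e.2 then 0 else 1 := by
  unfold mistakes
  rw [List.length_append, List.length_singleton, List.range_succ, List.countP_append]
  congr 1
  · apply List.countP_congr
    intro i hi
    rw [List.mem_range] at hi
    rw [List.take_append_of_le_length (le_of_lt hi), List.getD_append _ _ _ _ hi]
  · simp only [List.countP_singleton, List.take_append_of_le_length le_rfl,
      List.take_length, List.getD_append_right _ _ _ _ le_rfl, Nat.sub_self]
    by_cases h : L S e.1 = e.2 <;> simp [h]

lemma advIter_spec (L : Learner) (T : TreeCode) (n : ℕ) :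
    (advIter L n T).1.length = n ∧
    (advIter L n T).2 = branchSample T (advIter L n T).1 ∧
    mistakes L (advIter L n T).2 = n := by
  induction n with
  | zero => simp [advIter, branchSample, mistakes]
  | succ n ih =>
    obtain ⟨h1, h2, h3⟩ := ih
    refine ⟨?_, ?_, ?_⟩
    · simp [advIter, advStep, h1]
    · simp only [advIter, advStep, branchSample_concat, h2]
    · simp only [advIter, advStep, mistakes_concat, h3]
      simp

theorem stmt15 (H : Set (ℕ → Bool)) (d : ℕ) (L : Learner) (hc : Computable₂ L)
    (hm : ∀ S : Sample, Realizable H S → mistakes L S ≤ d) :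
    Eldim H ≤ (d : ℕ∞) := by
  have hE : EldimLe H d := by
    refine ⟨fun T => (advIter L (d+1) T).1, Computable.fst.comp (advIter_computable hc (d+1)), ?_⟩
    intro T
    obtain ⟨h1, h2, h3⟩ := advIter_spec L T (d+1)
    refine ⟨h1, fun hr => ?_⟩
    have hle := hm _ hr
    rw [← h2, h3] at hle
    omega
  exact sInf_le ⟨d, hE, rfl⟩
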